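/- Let ω be a weight function on (0,1) with all moments ∫_0^1 t^n ω(t) dt finite, and B a weight function on (1,∞) with W_B = ∫_0^1 B(1/t²)/(t(1−t)²) dt < ∞. Then for all nonnegative integers j, k, s, the function C_s^ω(e^s_{j,k}) belongs to L^{2,B}(D̄^c) and ‖C_s^ω(e^s_{j,k})‖_B² = π · ε_{k−j} · (γ^ω_{k,s})² · ∫_0^1 u^{k−j−1} B(1/u) du, where ε_p = 1 if p ≥ 0 and ε_p = 0 if p < 0. -/

import Mathlib

open MeasureTheory Complex

/-- The open unit disc in `ℂ`. -/
def unitDisc : Set ℂ := {z : ℂ | ‖z‖ < 1}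

/-- The exterior of the closed unit disc in `ℂ`. -/
def outerDisc : Set ℂ := {z : ℂ | 1 < ‖z‖}

/-- The solid weighted Cauchy transform `C_s^ω f (z) = (1/π) ∫_D f(ξ) ω(|ξ|²)/(z-ξ) dA(ξ)`. -/
noncomputable def solidCauchy (ω : ℝ → ℝ) (f : ℂ → ℂ) (z : ℂ) : ℂ :=
  (Real.pi : ℂ)⁻¹ * ∫ ξ in unitDisc, f ξ * (ω (‖ξ‖ ^ 2) : ℂ) / (z - ξ)

/-- The generic functions `e^ℓ_{j,k}(ξ) = ξ^j ξ̄^k (1 - |ξ|²)^ℓ`. -/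
noncomputable def eFun (j k l : ℕ) (ξ : ℂ) : ℂ :=
  ξ ^ j * (starRingEnd ℂ) ξ ^ k * (((1 - ‖ξ‖ ^ 2) ^ l : ℝ) : ℂ)

/-- The moments `γ^ω_{k,s} = ∫_0^1 t^k (1-t)^s ω(t) dt`. -/
noncomputable def moment (ω : ℝ → ℝ) (k s : ℕ) : ℝ :=
  ∫ t in Set.Ioo (0 : ℝ) 1, t ^ k * (1 - t) ^ s * ω t

/-- The inner product of `L^{2,B}(D̄^c)`:
`⟨f,g⟩_B = ∫_{|z|>1} f(z) conj(g(z)) B(|z|²) dA(z)`. -/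
noncomputable def innerB (B : ℝ → ℝ) (f g : ℂ → ℂ) : ℂ :=
  ∫ z in outerDisc, f z * (starRingEnd ℂ) (g z) * (B (‖z‖ ^ 2) : ℂ)

open Set Real

lemma real_integrable_comp_polarCoord_symm {E : Type*} [NormedAddCommGroup E] [NormedSpace ℝ E]
    (f : ℝ × ℝ → E) :
    Integrable f ↔ IntegrableOn (fun p => p.1 • f (polarCoord.symm p)) polarCoord.target := by
  set B : ℝ × ℝ → ℝ × ℝ →L[ℝ] ℝ × ℝ := fun p =>
    LinearMap.toContinuousLinearMap (Matrix.toLin (Module.Basis.finTwoProd ℝ) (Module.Basis.finTwoProd ℝ)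
      !![Real.cos p.2, -p.1 * Real.sin p.2; Real.sin p.2, p.1 * Real.cos p.2])
  have A : ∀ p ∈ polarCoord.target, HasFDerivWithinAt polarCoord.symm (B p) polarCoord.target p :=
    fun p _ => (hasFDerivAt_polarCoord_symm p).hasFDerivWithinAt
  have B_det : ∀ p, (B p).det = p.1 := by
    intro p
    conv_rhs => rw [← one_mul p.1, ← Real.cos_sq_add_sin_sq p.2]
    simp only [B, neg_mul, LinearMap.det_toContinuousLinearMap, LinearMap.det_toLin,
      Matrix.det_fin_two_of, sub_neg_eq_add]
    ring
  constructor
  · intro hf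
    have h1 : IntegrableOn f (polarCoord.symm '' polarCoord.target) := hf.integrableOn
    rw [integrableOn_image_iff_integrableOn_abs_det_fderiv_smul volume
      polarCoord.open_target.measurableSet A polarCoord.symm.injOn f] at h1
    apply h1.congr_fun _ polarCoord.open_target.measurableSet
    intro x hx
    simp only [B_det, abs_of_pos (Set.mem_Ioi.mp hx.1)]
  · intro h
    have h1 : IntegrableOn (fun x => |(B x).det| • f (polarCoord.symm x)) polarCoord.target := by
      apply h.congr_fun _ polarCoord.open_target.measurableSet
      intro x hx
      simp only [B_det, abs_of_pos (Set.mem_Ioi.mp hx.1)]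
    rw [← integrableOn_image_iff_integrableOn_abs_det_fderiv_smul volume
      polarCoord.open_target.measurableSet A polarCoord.symm.injOn f] at h1
    rw [polarCoord.symm_image_target_eq_source] at h1
    rw [← integrableOn_univ]
    exact h1.congr_set_ae polarCoord_source_ae_eq_univ.symm

lemma complex_integrable_comp_polarCoord_symm {E : Type*} [NormedAddCommGroup E] [NormedSpace ℝ E]
    (f : ℂ → E) :
    Integrable f ↔
      IntegrableOn (fun p : ℝ × ℝ => p.1 • f (Complex.polarCoord.symm p)) polarCoord.target := by
  rw [← (Complex.volume_preserving_equiv_real_prod.symm).integrable_comp_emb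
    Complex.measurableEquivRealProd.symm.measurableEmbedding,
    real_integrable_comp_polarCoord_symm]
  rfl

lemma setIntegrable_polar {E : Type*} [NormedAddCommGroup E] [NormedSpace ℝ E]
    (S : Set ℂ) (hSm : MeasurableSet S) (s : Set ℝ) (hsm : MeasurableSet s)
    (hs0 : s ⊆ Set.Ioi (0:ℝ))
    (hS : ∀ p ∈ polarCoord.target, (Complex.polarCoord.symm p ∈ S ↔ p.1 ∈ s))
    (f : ℂ → E) :
    IntegrableOn f S ↔
      IntegrableOn (fun p : ℝ × ℝ => p.1 • f (Complex.polarCoord.symm p))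
        (s ×ˢ Set.Ioo (-π) π) := by
  have hsub : s ×ˢ Set.Ioo (-π) π ⊆ polarCoord.target := by
    rw [polarCoord_target]
    exact Set.prod_mono hs0 (le_refl _)
  have key : Set.EqOn (fun p : ℝ × ℝ => p.1 • (S.indicator f) (Complex.polarCoord.symm p))
      ((s ×ˢ Set.Ioo (-π) π).indicator (fun p : ℝ × ℝ => p.1 • f (Complex.polarCoord.symm p)))
      polarCoord.target := by
    intro p hp
    by_cases h : p.1 ∈ s
    · have hmem : p ∈ s ×ˢ Set.Ioo (-π) π := ⟨h, hp.2⟩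
      simp only [Set.indicator_of_mem hmem, Set.indicator_of_mem ((hS p hp).2 h)]
    · have hmem : p ∉ s ×ˢ Set.Ioo (-π) π := fun hc => h hc.1
      have : Complex.polarCoord.symm p ∉ S := fun hc => h ((hS p hp).1 hc)
      simp only [Set.indicator_of_notMem hmem, Set.indicator_of_notMem this, smul_zero]
  rw [← integrable_indicator_iff hSm, complex_integrable_comp_polarCoord_symm]
  constructor
  · intro h
    have h2 := (h.congr_fun key polarCoord.open_target.measurableSet)
    rw [IntegrableOn, integrable_indicator_iff (hsm.prod measurableSet_Ioo), IntegrableOn,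
      Measure.restrict_restrict (hsm.prod measurableSet_Ioo),
      Set.inter_eq_self_of_subset_left hsub] at h2
    exact h2
  · intro h
    apply IntegrableOn.congr_fun _ key.symm polarCoord.open_target.measurableSet
    rw [IntegrableOn, integrable_indicator_iff (hsm.prod measurableSet_Ioo), IntegrableOn,
      Measure.restrict_restrict (hsm.prod measurableSet_Ioo),
      Set.inter_eq_self_of_subset_left hsub]
    exact h

lemma setIntegral_polar {E : Type*} [NormedAddCommGroup E] [NormedSpace ℝ E]
    (S : Set ℂ) (hSm : MeasurableSet S) (s : Set ℝ) (hsm : MeasurableSet s)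
    (hs0 : s ⊆ Set.Ioi (0:ℝ))
    (hS : ∀ p ∈ polarCoord.target, (Complex.polarCoord.symm p ∈ S ↔ p.1 ∈ s))
    (f : ℂ → E) :
    ∫ z in S, f z = ∫ p in s ×ˢ Set.Ioo (-π) π,
      p.1 • f (Complex.polarCoord.symm p) := by
  have hsub : s ×ˢ Set.Ioo (-π) π ⊆ polarCoord.target := by
    rw [polarCoord_target]
    exact Set.prod_mono hs0 (le_refl _)
  have key : Set.EqOn (fun p : ℝ × ℝ => p.1 • (S.indicator f) (Complex.polarCoord.symm p))
      ((s ×ˢ Set.Ioo (-π) π).indicator (fun p : ℝ × ℝ => p.1 • f (Complex.polarCoord.symm p)))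
      polarCoord.target := by
    intro p hp
    by_cases h : p.1 ∈ s
    · have hmem : p ∈ s ×ˢ Set.Ioo (-π) π := ⟨h, hp.2⟩
      simp only [Set.indicator_of_mem hmem, Set.indicator_of_mem ((hS p hp).2 h)]
    · have hmem : p ∉ s ×ˢ Set.Ioo (-π) π := fun hc => h hc.1
      have : Complex.polarCoord.symm p ∉ S := fun hc => h ((hS p hp).1 hc)
      simp only [Set.indicator_of_notMem hmem, Set.indicator_of_notMem this, smul_zero]
  rw [← integral_indicator hSm, ← Complex.integral_comp_polarCoord_symm,
    setIntegral_congr_fun polarCoord.open_target.measurableSet key,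
    setIntegral_indicator (hsm.prod measurableSet_Ioo),
    Set.inter_eq_self_of_subset_right hsub]

lemma integral_exp_int_Ioo (n : ℤ) :
    (∫ θ in Set.Ioo (-π) π, Complex.exp (n * θ * Complex.I)) =
      if n = 0 then (2 * π : ℝ) else 0 := by
  have h1 : (∫ θ in Set.Ioo (-π) π, Complex.exp (n * θ * Complex.I)) =
      ∫ θ in (-π)..π, Complex.exp (n * θ * Complex.I) := by
    rw [intervalIntegral.integral_of_le (by linarith [Real.pi_pos]),
      MeasureTheory.integral_Ioc_eq_integral_Ioo]
  rw [h1]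
  by_cases hn : n = 0
  · subst hn
    simp only [Int.cast_zero, zero_mul, Complex.exp_zero, if_true]
    rw [intervalIntegral.integral_const]
    push_cast
    ring_nf
    simp [two_mul]
  · rw [if_neg hn]
    have hc : ((n : ℂ) * Complex.I) ≠ 0 := by
      simp [Complex.I_ne_zero, hn]
    have h2 : ∀ θ : ℝ, (n : ℂ) * θ * Complex.I = ((n : ℂ) * Complex.I) * θ := by
      intro θ; ring
    simp_rw [h2]
    rw [integral_exp_mul_complex hc]
    have hw : Complex.exp ((n : ℂ) * Complex.I * π) = Complex.exp ((n : ℂ) * Complex.I * (-π : ℝ)) := by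
      rw [← div_eq_one_iff_eq (Complex.exp_ne_zero _), ← Complex.exp_sub]
      have : (n : ℂ) * Complex.I * (π : ℝ) - (n : ℂ) * Complex.I * (-π : ℝ)
          = (n : ℂ) * (2 * (π:ℝ) * Complex.I) := by push_cast; ring
      rw [this, Complex.exp_int_mul_two_pi_mul_I]
    rw [hw, sub_self, zero_div]
    norm_num

lemma angular_integral (z : ℂ) (hz : 1 < ‖z‖) {r : ℝ} (hr : 0 < r) (hr1 : r < 1)
    (p : ℤ) :
    (∫ θ in Set.Ioo (-π) π,
        Complex.exp (p * θ * Complex.I) / (z - r * Complex.exp (θ * Complex.I)))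
      = if p ≤ 0 then ((2 * π : ℝ) : ℂ) * (r : ℂ) ^ (-p) * z ^ (p - 1) else 0 := by
  have hz0 : z ≠ 0 := by
    intro h; rw [h] at hz; simp at hz; linarith
  set F : ℕ → ℝ → ℂ := fun m θ =>
    (r : ℂ) ^ m * z ^ (-(1:ℤ) - m) * Complex.exp ((p + m) * θ * Complex.I) with hF
  have habs : ∀ θ : ℝ, ‖Complex.exp (θ * Complex.I)‖ = 1 := fun θ =>
    Complex.norm_exp_ofReal_mul_I θ
  have hzero : ∀ w : ℂ, ‖w‖ ≤ 1 → z - w ≠ 0 := by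
    intro w hw h
    have : ‖z‖ = ‖w‖ := by
      have : z = w := by linear_combination h
      rw [this]
    linarith
  -- pointwise HasSum
  have hsum : ∀ θ : ℝ, HasSum (fun m => F m θ)
      (Complex.exp (p * θ * Complex.I) / (z - r * Complex.exp (θ * Complex.I))) := by
    intro θ
    have hx : ‖(r : ℂ) * Complex.exp (θ * Complex.I) / z‖ < 1 := by
      rw [norm_div, norm_mul,
        habs θ, mul_one, Complex.norm_real, Real.norm_eq_abs, abs_of_pos hr]
      rw [div_lt_one (by linarith)]
      linarith
    have hgeo := (hasSum_geometric_of_norm_lt_one hx).mul_left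
      (Complex.exp (p * θ * Complex.I) / z)
    have hne : z - r * Complex.exp (θ * Complex.I) ≠ 0 := by
      apply hzero
      rw [norm_mul, habs θ, mul_one, Complex.norm_real, Real.norm_eq_abs, abs_of_pos hr]
      linarith
    have e1 : (fun m : ℕ => Complex.exp (p * θ * Complex.I) / z *
        ((r : ℂ) * Complex.exp (θ * Complex.I) / z) ^ m) = fun m => F m θ := by
      funext m
      rw [hF]
      simp only [div_pow, mul_pow]
      rw [zpow_sub₀ hz0, zpow_neg, zpow_one, zpow_natCast]
      have hexp : Complex.exp ((p + m) * θ * Complex.I)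
          = Complex.exp (p * θ * Complex.I) * Complex.exp (θ * Complex.I) ^ m := by
        rw [← Complex.exp_nat_mul, ← Complex.exp_add]
        congr 1
        push_cast
        ring
      rw [hexp]
      field_simp
    have e2 : Complex.exp (p * θ * Complex.I) / z *
        ((1 : ℂ) - r * Complex.exp (θ * Complex.I) / z)⁻¹
        = Complex.exp (p * θ * Complex.I) / (z - r * Complex.exp (θ * Complex.I)) := by
      have h1 : (1 : ℂ) - r * Complex.exp (θ * Complex.I) / z
          = (z - r * Complex.exp (θ * Complex.I)) / z := by
        field_simp
      rw [h1]
      field_simp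
    rw [e1, e2] at hgeo
    exact hgeo
  -- integrability of each term
  have hF_int : ∀ m : ℕ, IntegrableOn (F m) (Set.Ioo (-π) π) := by
    intro m
    apply (Continuous.integrableOn_Icc ?_).mono_set Set.Ioo_subset_Icc_self
    apply Continuous.mul continuous_const
    exact Complex.continuous_exp.comp (by continuity)
  -- norms
  have hnorm : ∀ m : ℕ, ∀ θ : ℝ, ‖F m θ‖ = r ^ m * (‖z‖) ^ (-(1:ℤ) - m) := by
    intro m θ
    rw [hF]
    simp only [norm_mul]
    have : ((p : ℂ) + m) * θ * Complex.I = ((((p : ℝ) + m) * θ : ℝ) : ℂ) * Complex.I := by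
      push_cast; ring
    rw [this, Complex.norm_exp_ofReal_mul_I, mul_one, norm_pow, norm_zpow,
      Complex.norm_real, Real.norm_eq_abs, abs_of_pos hr]
  have hF_norm_int : ∀ m : ℕ, (∫ θ in Set.Ioo (-π) π, ‖F m θ‖)
      = (2 * π) * (r ^ m * (‖z‖) ^ (-(1:ℤ) - m)) := by
    intro m
    simp_rw [hnorm m]
    rw [setIntegral_const, Measure.real, Real.volume_Ioo, smul_eq_mul]
    congr 1
    rw [ENNReal.toReal_ofReal (by linarith [Real.pi_pos])]
    ring
  have hF_sum : Summable fun m => ∫ θ in Set.Ioo (-π) π, ‖F m θ‖ := by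
    simp_rw [hF_norm_int]
    apply Summable.mul_left
    have : ∀ m : ℕ, r ^ m * (‖z‖) ^ (-(1:ℤ) - m)
        = (‖z‖)⁻¹ * (r / ‖z‖) ^ m := by
      intro m
      rw [zpow_sub₀ (by positivity), zpow_neg, zpow_one, zpow_natCast, div_pow]
      field_simp
    simp_rw [this]
    apply Summable.mul_left
    apply summable_geometric_of_lt_one (by positivity)
    rw [div_lt_one (by linarith)]
    linarith
  -- swap integral and sum
  have hswap : (∫ θ in Set.Ioo (-π) π,
      Complex.exp (p * θ * Complex.I) / (z - r * Complex.exp (θ * Complex.I)))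
      = ∑' m : ℕ, ∫ θ in Set.Ioo (-π) π, F m θ := by
    rw [show (fun θ : ℝ => Complex.exp (p * θ * Complex.I) /
        (z - r * Complex.exp (θ * Complex.I))) = fun θ => ∑' m, F m θ from
      funext fun θ => ((hsum θ).tsum_eq).symm]
    exact (integral_tsum_of_summable_integral_norm hF_int hF_sum).symm
  rw [hswap]
  -- compute each integral
  have hterm : ∀ m : ℕ, (∫ θ in Set.Ioo (-π) π, F m θ)
      = (r : ℂ) ^ m * z ^ (-(1:ℤ) - m) * (if (p + m : ℤ) = 0 then ((2 * π : ℝ) : ℂ) else 0) := by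
    intro m
    rw [hF]
    simp only
    rw [MeasureTheory.integral_const_mul]
    congr 1
    have : ∀ θ : ℝ, ((p : ℂ) + m) * θ * Complex.I = (((p + m : ℤ) : ℂ)) * θ * Complex.I := by
      intro θ; push_cast; ring
    simp_rw [this]
    rw [integral_exp_int_Ioo (p + m)]
    split_ifs <;> simp
  simp_rw [hterm]
  by_cases hp : p ≤ 0
  · rw [if_pos hp]
    rw [tsum_eq_single (-p).toNat]
    · have hm : ((-p).toNat : ℤ) = -p := Int.toNat_of_nonneg (by linarith)
      have h0 : (p + ((-p).toNat : ℕ) : ℤ) = 0 := by rw [hm]; ring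
      rw [if_pos h0]
      have h1 : ((r : ℂ)) ^ ((-p).toNat) = (r : ℂ) ^ (-p) := by
        rw [← zpow_natCast, hm]
      have h2 : z ^ (-(1:ℤ) - ((-p).toNat : ℕ)) = z ^ (p - 1) := by
        congr 1
        rw [hm]; ring
      rw [h1, h2]
      ring
    · intro m hm
      have : (p + m : ℤ) ≠ 0 := by
        intro h
        apply hm
        have : (m : ℤ) = -p := by linarith [h]
        omega
      rw [if_neg this, mul_zero]
  · rw [if_neg hp]
    have hzero' : ∀ m : ℕ, (r : ℂ) ^ m * z ^ (-(1:ℤ) - m) *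
        (if (p + m : ℤ) = 0 then ((2 * π : ℝ) : ℂ) else 0) = 0 := by
      intro m
      have : (p + m : ℤ) ≠ 0 := by omega
      rw [if_neg this, mul_zero]
    rw [tsum_congr hzero', tsum_zero]

lemma sq_image_Ioo : (fun r : ℝ => r ^ 2) '' Set.Ioo 0 1 = Set.Ioo (0:ℝ) 1 := by
  ext x
  constructor
  · rintro ⟨r, ⟨hr0, hr1⟩, rfl⟩
    exact ⟨by positivity, pow_lt_one₀ (le_of_lt hr0) hr1 two_ne_zero⟩
  · rintro ⟨hx0, hx1⟩
    exact ⟨Real.sqrt x, ⟨Real.sqrt_pos.2 hx0,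
      (Real.sqrt_lt' one_pos).2 (by linarith)⟩, Real.sq_sqrt (le_of_lt hx0)⟩

lemma sq_hasDeriv : ∀ r ∈ Set.Ioo (0:ℝ) 1,
    HasDerivWithinAt (fun r : ℝ => r ^ 2) (2 * r) (Set.Ioo 0 1) r := by
  intro r _
  have := hasDerivAt_pow 2 r
  simpa using this.hasDerivWithinAt

lemma sq_injOn : Set.InjOn (fun r : ℝ => r ^ 2) (Set.Ioo 0 1) := by
  intro a ha b hb hab
  simp only at hab
  nlinarith [ha.1, hb.1]

lemma subst_sq_integrable (g : ℝ → ℝ) :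
    IntegrableOn g (Set.Ioo (0:ℝ) 1) ↔
      IntegrableOn (fun r => 2 * r * g (r ^ 2)) (Set.Ioo (0:ℝ) 1) := by
  conv_lhs => rw [← sq_image_Ioo]
  rw [integrableOn_image_iff_integrableOn_abs_deriv_smul
    measurableSet_Ioo sq_hasDeriv sq_injOn g]
  apply integrableOn_congr_fun _ measurableSet_Ioo
  intro r hr
  simp only [smul_eq_mul]
  rw [abs_of_pos (by linarith [hr.1])]

lemma subst_sq_integral (g : ℝ → ℝ) :
    (∫ t in Set.Ioo (0:ℝ) 1, g t) = ∫ r in Set.Ioo (0:ℝ) 1, 2 * r * g (r ^ 2) := by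
  conv_lhs => rw [← sq_image_Ioo]
  rw [integral_image_eq_integral_abs_deriv_smul measurableSet_Ioo sq_hasDeriv sq_injOn g]
  apply setIntegral_congr_fun measurableSet_Ioo
  intro r hr
  simp only [smul_eq_mul]
  rw [abs_of_pos (by linarith [hr.1])]

lemma inv_image_Ioo : (fun t : ℝ => t⁻¹) '' Set.Ioo 0 1 = Set.Ioi (1:ℝ) := by
  ext x
  constructor
  · rintro ⟨t, ⟨ht0, ht1⟩, rfl⟩
    exact (one_lt_inv₀ ht0).2 ht1
  · intro hx
    have hx0 : 0 < x := lt_trans one_pos hx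
    exact ⟨x⁻¹, ⟨by positivity, (inv_lt_one₀ (by positivity)).2 hx⟩, inv_inv x⟩

lemma inv_hasDeriv : ∀ t ∈ Set.Ioo (0:ℝ) 1,
    HasDerivWithinAt (fun t : ℝ => t⁻¹) (-(t ^ 2)⁻¹) (Set.Ioo 0 1) t := by
  intro t ht
  exact (hasDerivAt_inv (ne_of_gt ht.1)).hasDerivWithinAt

lemma inv_injOn : Set.InjOn (fun t : ℝ => t⁻¹) (Set.Ioo 0 1) :=
  Set.injOn_of_injective inv_injective

lemma subst_inv_integrable (g : ℝ → ℝ) :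
    IntegrableOn g (Set.Ioi (1:ℝ)) ↔
      IntegrableOn (fun t => (t ^ 2)⁻¹ * g t⁻¹) (Set.Ioo (0:ℝ) 1) := by
  conv_lhs => rw [← inv_image_Ioo]
  rw [integrableOn_image_iff_integrableOn_abs_deriv_smul
    measurableSet_Ioo inv_hasDeriv inv_injOn g]
  apply integrableOn_congr_fun _ measurableSet_Ioo
  intro t ht
  simp only [smul_eq_mul, abs_neg]
  rw [abs_of_pos (by have := ht.1; positivity)]

lemma subst_inv_integral (g : ℝ → ℝ) :
    (∫ x in Set.Ioi (1:ℝ), g x) = ∫ t in Set.Ioo (0:ℝ) 1, (t ^ 2)⁻¹ * g t⁻¹ := by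
  conv_lhs => rw [← inv_image_Ioo]
  rw [integral_image_eq_integral_abs_deriv_smul measurableSet_Ioo inv_hasDeriv inv_injOn g]
  apply setIntegral_congr_fun measurableSet_Ioo
  intro t ht
  simp only [smul_eq_mul, abs_neg]
  rw [abs_of_pos (by have := ht.1; positivity)]

lemma measurableSet_unitDisc : MeasurableSet unitDisc :=
  measurableSet_lt (continuous_norm.measurable) measurable_const

lemma measurableSet_outerDisc : MeasurableSet outerDisc :=
  measurableSet_lt measurable_const (continuous_norm.measurable)

lemma polarCoord_symm_exp (p : ℝ × ℝ) :
    Complex.polarCoord.symm p = (p.1 : ℂ) * Complex.exp (p.2 * Complex.I) := by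
  rw [Complex.polarCoord_symm_apply, Complex.exp_mul_I, ← Complex.ofReal_cos,
    ← Complex.ofReal_sin]

lemma hS_unitDisc : ∀ p ∈ polarCoord.target,
    (Complex.polarCoord.symm p ∈ unitDisc ↔ p.1 ∈ Set.Ioo (0:ℝ) 1) := by
  intro p hp
  rw [polarCoord_target] at hp
  have h1 : ‖Complex.polarCoord.symm p‖ = p.1 := by
    rw [Complex.norm_polarCoord_symm, abs_of_pos (Set.mem_Ioi.mp hp.1)]
  constructor
  · intro h; exact ⟨hp.1, by rwa [unitDisc, Set.mem_setOf_eq, h1] at h⟩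
  · intro h; rw [unitDisc, Set.mem_setOf_eq, h1]; exact h.2

lemma hS_outerDisc : ∀ p ∈ polarCoord.target,
    (Complex.polarCoord.symm p ∈ outerDisc ↔ p.1 ∈ Set.Ioi (1:ℝ)) := by
  intro p hp
  rw [polarCoord_target] at hp
  have h1 : ‖Complex.polarCoord.symm p‖ = p.1 := by
    rw [Complex.norm_polarCoord_symm, abs_of_pos (Set.mem_Ioi.mp hp.1)]
  rw [outerDisc, Set.mem_setOf_eq, h1, Set.mem_Ioi]

lemma restrict_prod_eq (s t : Set ℝ) (hs : MeasurableSet s) (ht : MeasurableSet t) :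
    (volume : Measure (ℝ × ℝ)).restrict (s ×ˢ t) =
      (volume.restrict s).prod (volume.restrict t) := by
  rw [Measure.volume_eq_prod, Measure.prod_restrict]

lemma abs_r_exp (r : ℝ) (hr : 0 < r) (θ : ℝ) :
    ‖(r : ℂ) * Complex.exp (θ * Complex.I)‖ = r := by
  rw [norm_mul, Complex.norm_exp_ofReal_mul_I, mul_one, Complex.norm_real, Real.norm_eq_abs, abs_of_pos hr]

lemma eFun_polar (j k s : ℕ) (r : ℝ) (hr : 0 < r) (θ : ℝ) :
    eFun j k s ((r : ℂ) * Complex.exp (θ * Complex.I))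
      = ((r ^ (j + k) * (1 - r ^ 2) ^ s : ℝ) : ℂ) *
          Complex.exp ((((j : ℤ) - k) : ℂ) * θ * Complex.I) := by
  rw [eFun, abs_r_exp r hr θ]
  have hconj : (starRingEnd ℂ) ((r : ℂ) * Complex.exp (θ * Complex.I))
      = (r : ℂ) * Complex.exp (-(θ * Complex.I)) := by
    rw [map_mul, Complex.conj_ofReal, ← Complex.exp_conj]
    congr 1
    simp [Complex.conj_ofReal]
  rw [hconj]
  rw [mul_pow, mul_pow, ← Complex.exp_nat_mul, ← Complex.exp_nat_mul]
  rw [show ((r:ℂ)^j * Complex.exp (j * (θ * Complex.I))) *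
      ((r:ℂ)^k * Complex.exp (k * -(θ * Complex.I))) * (((1 - r^2)^s : ℝ) : ℂ)
      = ((r:ℂ)^j * (r:ℂ)^k * (((1 - r^2)^s : ℝ) : ℂ)) *
        (Complex.exp (j * (θ * Complex.I)) * Complex.exp (k * -(θ * Complex.I))) by ring]
  rw [← Complex.exp_add]
  congr 1
  · push_cast; rw [pow_add]
  · congr 1; push_cast; ring

lemma integral_cplx_ofReal {μ : Measure ℝ} {f : ℝ → ℝ} :
    ∫ x, ((f x : ℝ) : ℂ) ∂μ = ((∫ x, f x ∂μ : ℝ) : ℂ) :=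
  integral_ofReal

set_option maxHeartbeats 1600000 in
lemma solidCauchy_eFun_eq
    (ω : ℝ → ℝ) (hω_meas : Measurable ω)
    (hω_nonneg : ∀ t ∈ Set.Ioo (0 : ℝ) 1, 0 ≤ ω t)
    (hω_mom : ∀ n : ℕ, IntegrableOn (fun t => t ^ n * ω t) (Set.Ioo (0 : ℝ) 1))
    (j k s : ℕ) (z : ℂ) (hz : 1 < ‖z‖) :
    solidCauchy ω (eFun j k s) z =
      if j ≤ k then (moment ω k s : ℂ) * z ^ ((j : ℤ) - k - 1) else 0 := by
  have hπ : (0:ℝ) < π := Real.pi_pos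
  have hz1 : (0:ℝ) < ‖z‖ - 1 := by linarith
  set p : ℤ := (j : ℤ) - k with hp
  set F : ℂ → ℂ := fun ξ => eFun j k s ξ * ((ω (‖ξ‖ ^ 2) : ℝ) : ℂ) / (z - ξ) with hFdef
  have hden : ∀ ξ : ℂ, ‖ξ‖ ≤ 1 → (‖z‖ - 1) ≤ ‖z - ξ‖ := by
    intro ξ hξ
    have h := norm_sub_norm_le z ξ
    linarith
  -- measurability of F
  have hmE : Measurable (eFun j k s) := by
    have : Continuous (eFun j k s) := by
      unfold eFun
      continuity
    exact this.measurable
  have hmF : Measurable F := by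
    apply Measurable.div
    · exact hmE.mul (Complex.measurable_ofReal.comp
        (hω_meas.comp ((continuous_norm.pow 2).measurable)))
    · exact measurable_const.sub measurable_id
  -- measurability of the polar integrand
  have hmsymm : Measurable (fun q : ℝ × ℝ => Complex.polarCoord.symm q) := by
    have hc : Continuous (fun q : ℝ × ℝ => (q.1 : ℂ) * Complex.exp (q.2 * Complex.I)) := by
      continuity
    have : (fun q : ℝ × ℝ => Complex.polarCoord.symm q)
        = fun q : ℝ × ℝ => (q.1 : ℂ) * Complex.exp (q.2 * Complex.I) :=
      funext polarCoord_symm_exp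
    rw [this]; exact hc.measurable
  have hmH : Measurable (fun q : ℝ × ℝ => q.1 • F (Complex.polarCoord.symm q)) :=
    measurable_fst.smul (hmF.comp hmsymm)
  -- integrability of the dominating radial function
  have hω_int : IntegrableOn (fun r : ℝ => 2 * r * ω (r ^ 2)) (Set.Ioo (0:ℝ) 1) := by
    apply (subst_sq_integrable ω).1
    simpa using hω_mom 0
  -- integrability on the rectangle
  have hint : IntegrableOn (fun q : ℝ × ℝ => q.1 • F (Complex.polarCoord.symm q))
      (Set.Ioo (0:ℝ) 1 ×ˢ Set.Ioo (-π) π) := by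
    have hG : Integrable (fun q : ℝ × ℝ =>
        ((2 * q.1 * ω (q.1 ^ 2)) * (‖z‖ - 1)⁻¹) * (1:ℝ))
        (((volume : Measure ℝ).restrict (Set.Ioo (0:ℝ) 1)).prod
          ((volume : Measure ℝ).restrict (Set.Ioo (-π) π))) :=
      Integrable.mul_prod (hω_int.mul_const _) (integrable_const 1)
    rw [IntegrableOn, restrict_prod_eq _ _ measurableSet_Ioo measurableSet_Ioo]
    apply Integrable.mono hG (hmH.aestronglyMeasurable)
    rw [← restrict_prod_eq _ _ measurableSet_Ioo measurableSet_Ioo,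
      ae_restrict_iff' (measurableSet_Ioo.prod measurableSet_Ioo)]
    apply Filter.Eventually.of_forall
    rintro ⟨r, θ⟩ ⟨hr, hθ⟩
    simp only
    have hr0 : (0:ℝ) < r := hr.1
    have hr1 : r < 1 := hr.2
    have hξ : Complex.polarCoord.symm (r, θ) = (r:ℂ) * Complex.exp (θ * Complex.I) :=
      polarCoord_symm_exp (r, θ)
    have habsξ : ‖Complex.polarCoord.symm (r, θ)‖ = r := by
      rw [hξ]; exact abs_r_exp r hr0 θ
    have hωpos : 0 ≤ ω (r ^ 2) :=
      hω_nonneg _ ⟨by positivity, by nlinarith⟩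
    rw [norm_smul, Real.norm_eq_abs, abs_of_pos hr0]
    have hr2 : (0:ℝ) ≤ 1 - r^2 := by nlinarith
    have hEbound : ‖eFun j k s (Complex.polarCoord.symm (r, θ))‖ ≤ 1 := by
      rw [eFun]
      simp only [norm_mul, norm_pow, Complex.norm_conj, habsξ, Complex.norm_real, Real.norm_eq_abs]
      rw [← abs_pow]
      have h1 : r ^ j ≤ 1 := pow_le_one₀ (le_of_lt hr0) (le_of_lt hr1)
      have h2 : r ^ k ≤ 1 := pow_le_one₀ (le_of_lt hr0) (le_of_lt hr1)
      have h3 : |(1 - r^2)^s| ≤ 1 := by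
        rw [_root_.abs_of_nonneg (by positivity : (0:ℝ) ≤ (1 - r^2)^s)]
        exact pow_le_one₀ hr2 (by nlinarith)
      calc r ^ j * r ^ k * |(1 - r^2)^s| ≤ 1 * 1 * 1 := by
            apply mul_le_mul (mul_le_mul h1 h2 (by positivity) zero_le_one) h3 (abs_nonneg _)
              (by norm_num)
        _ = 1 := by ring
    have hFbound : ‖F (Complex.polarCoord.symm (r, θ))‖ ≤ ω (r ^ 2) * (‖z‖ - 1)⁻¹ := by
      rw [hFdef]
      simp only [norm_div, norm_mul, Complex.norm_real, Real.norm_eq_abs]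
      rw [habsξ]
      have hd : (‖z - Complex.polarCoord.symm (r, θ)‖)⁻¹
          ≤ (‖z‖ - 1)⁻¹ := by
        apply inv_anti₀ hz1
        exact hden _ (by rw [habsξ]; linarith)
      rw [div_eq_mul_inv]
      calc ‖eFun j k s (Complex.polarCoord.symm (r, θ))‖ * |ω (r^2)| *
            (‖z - Complex.polarCoord.symm (r, θ)‖)⁻¹
          ≤ 1 * ω (r^2) * (‖z‖ - 1)⁻¹ := by
            apply mul_le_mul _ hd (by positivity) (by positivity)
            apply mul_le_mul hEbound (le_of_eq (_root_.abs_of_nonneg hωpos)) (abs_nonneg _) zero_le_one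
        _ = ω (r^2) * (‖z‖ - 1)⁻¹ := by ring
    calc r * ‖F (Complex.polarCoord.symm (r, θ))‖
        ≤ r * (ω (r ^ 2) * (‖z‖ - 1)⁻¹) := by
          apply mul_le_mul_of_nonneg_left hFbound (le_of_lt hr0)
      _ ≤ ‖2 * r * ω (r ^ 2) * (‖z‖ - 1)⁻¹ * 1‖ := by
          rw [Real.norm_eq_abs, _root_.abs_of_nonneg (by positivity :
            (0:ℝ) ≤ 2 * r * ω (r ^ 2) * (‖z‖ - 1)⁻¹ * 1)]
          nlinarith [inv_nonneg.2 (le_of_lt hz1), mul_nonneg hωpos (inv_nonneg.2 (le_of_lt hz1))]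
  -- polar transform + Fubini
  have step1 : (∫ ξ in unitDisc, F ξ)
      = ∫ r in Set.Ioo (0:ℝ) 1, ∫ θ in Set.Ioo (-π) π,
          r • F (Complex.polarCoord.symm (r, θ)) := by
    rw [setIntegral_polar unitDisc measurableSet_unitDisc _ measurableSet_Ioo
      (fun x hx => hx.1) hS_unitDisc F]
    rw [restrict_prod_eq _ _ measurableSet_Ioo measurableSet_Ioo]
    rw [MeasureTheory.integral_prod]
    rwa [IntegrableOn, restrict_prod_eq _ _ measurableSet_Ioo measurableSet_Ioo] at hint
  -- inner integral
  have inner : ∀ r ∈ Set.Ioo (0:ℝ) 1,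
      (∫ θ in Set.Ioo (-π) π, r • F (Complex.polarCoord.symm (r, θ)))
        = ((r ^ (j + k + 1) * (1 - r ^ 2) ^ s * ω (r ^ 2) : ℝ) : ℂ) *
            (if p ≤ 0 then ((2 * π : ℝ) : ℂ) * (r : ℂ) ^ (-p) * z ^ (p - 1) else 0) := by
    intro r hr
    have hr0 := hr.1
    have hr1 := hr.2
    have key : ∀ θ : ℝ, r • F (Complex.polarCoord.symm (r, θ))
        = ((r ^ (j + k + 1) * (1 - r ^ 2) ^ s * ω (r ^ 2) : ℝ) : ℂ) *
            (Complex.exp ((p : ℂ) * θ * Complex.I) /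
              (z - r * Complex.exp (θ * Complex.I))) := by
      intro θ
      rw [hFdef]
      simp only
      rw [polarCoord_symm_exp (r, θ), eFun_polar j k s r hr0 θ, abs_r_exp r hr0 θ,
        Complex.real_smul, hp]
      push_cast
      ring
    simp_rw [key]
    rw [MeasureTheory.integral_const_mul, angular_integral z hz hr0 hr1 p]
  rw [solidCauchy]
  have hFi : (∫ ξ in unitDisc, eFun j k s ξ * ((ω (‖ξ‖ ^ 2) : ℝ) : ℂ) / (z - ξ))
      = ∫ ξ in unitDisc, F ξ := rfl
  rw [hFi, step1, setIntegral_congr_fun measurableSet_Ioo inner]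
  by_cases hjk : j ≤ k
  · have hple : p ≤ 0 := by omega
    rw [if_pos hjk]
    simp only [if_pos hple]
    have hinteq : Set.EqOn (fun r : ℝ =>
        ((r ^ (j + k + 1) * (1 - r ^ 2) ^ s * ω (r ^ 2) : ℝ) : ℂ) *
          (((2 * π : ℝ) : ℂ) * (r : ℂ) ^ (-p) * z ^ (p - 1)))
        (fun r : ℝ => (((2 * π : ℝ) : ℂ) * z ^ (p - 1)) *
          ((r ^ (2 * k + 1) * (1 - r ^ 2) ^ s * ω (r ^ 2) : ℝ) : ℂ))
        (Set.Ioo (0:ℝ) 1) := by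
      intro r hr
      simp only
      have hnp : -p = ((k - j : ℕ) : ℤ) := by omega
      rw [hnp, zpow_natCast]
      have : ((r:ℂ)) ^ (k - j : ℕ) = ((r ^ (k - j : ℕ) : ℝ) : ℂ) := by push_cast; ring
      rw [this]
      have hcomb : (r ^ (j + k + 1) * (1 - r ^ 2) ^ s * ω (r ^ 2)) * r ^ (k - j : ℕ)
          = r ^ (2 * k + 1) * (1 - r ^ 2) ^ s * ω (r ^ 2) := by
        rw [show r ^ (j + k + 1) * (1 - r ^ 2) ^ s * ω (r ^ 2) * r ^ (k - j : ℕ)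
            = r ^ (j + k + 1) * r ^ (k - j : ℕ) * ((1 - r ^ 2) ^ s * ω (r ^ 2)) by ring,
          ← pow_add]
        have : j + k + 1 + (k - j) = 2 * k + 1 := by omega
        rw [this]
        ring
      push_cast [← hcomb]
      ring
    rw [setIntegral_congr_fun measurableSet_Ioo hinteq, MeasureTheory.integral_const_mul,
      integral_cplx_ofReal]
    have hhalf : (∫ r in Set.Ioo (0:ℝ) 1, r ^ (2 * k + 1) * (1 - r ^ 2) ^ s * ω (r ^ 2))
        = moment ω k s / 2 := by
      have h1 := subst_sq_integral (fun t => t ^ k * (1 - t) ^ s * ω t)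
      have h2 : Set.EqOn (fun r : ℝ => 2 * r * ((r ^ 2) ^ k * (1 - r ^ 2) ^ s * ω (r ^ 2)))
          (fun r : ℝ => 2 * (r ^ (2 * k + 1) * (1 - r ^ 2) ^ s * ω (r ^ 2)))
          (Set.Ioo (0:ℝ) 1) := by
        intro r hr
        simp only [← pow_mul]
        ring_nf
      rw [moment] at *
      rw [h1, setIntegral_congr_fun measurableSet_Ioo h2, MeasureTheory.integral_const_mul]
      ring
    rw [hhalf]
    have hπC : ((π : ℝ) : ℂ) ≠ 0 := by
      simp only [ne_eq, Complex.ofReal_eq_zero]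
      exact ne_of_gt hπ
    push_cast
    field_simp
  · have hple : ¬ (p ≤ 0) := by omega
    rw [if_neg hjk]
    simp only [if_neg hple, mul_zero]
    simp

lemma one_lt_inv_sq {t : ℝ} (ht0 : 0 < t) (ht1 : t < 1) : 1 < 1 / t ^ 2 := by
  rw [lt_div_iff₀ (by positivity)]
  nlinarith

set_option maxHeartbeats 1600000 in
theorem solidCauchy_eFun_mem_and_normSq
    (ω : ℝ → ℝ) (hω_meas : Measurable ω)
    (hω_nonneg : ∀ t ∈ Set.Ioo (0 : ℝ) 1, 0 ≤ ω t)
    (hω_mom : ∀ n : ℕ, IntegrableOn (fun t => t ^ n * ω t) (Set.Ioo (0 : ℝ) 1))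
    (B : ℝ → ℝ) (hB_meas : Measurable B)
    (hB_nonneg : ∀ t ∈ Set.Ioi (1 : ℝ), 0 ≤ B t)
    (hW : IntegrableOn (fun t => B (1 / t ^ 2) / (t * (1 - t) ^ 2)) (Set.Ioo (0 : ℝ) 1))
    (j k s : ℕ) :
    -- C_s^ω(e^s_{j,k}) belongs to L^{2,B}(D̄^c)
    IntegrableOn (fun z => ‖solidCauchy ω (eFun j k s) z‖ ^ 2 * B (‖z‖ ^ 2))
      outerDisc ∧
    -- and its square norm is as announced
    (∫ z in outerDisc, ‖solidCauchy ω (eFun j k s) z‖ ^ 2 * B (‖z‖ ^ 2)) =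
      Real.pi * (if j ≤ k then 1 else 0) * (moment ω k s) ^ 2 *
        (∫ u in Set.Ioo (0 : ℝ) 1, u ^ ((k : ℤ) - (j : ℤ) - 1) * B (1 / u)) := by
  have hπ : (0:ℝ) < π := Real.pi_pos
  have hval := solidCauchy_eFun_eq ω hω_meas hω_nonneg hω_mom j k s
  by_cases hjk : j ≤ k
  swap
  · have h0 : Set.EqOn (fun z => ‖solidCauchy ω (eFun j k s) z‖ ^ 2 * B (‖z‖ ^ 2))
        (fun _ => (0:ℝ)) outerDisc := by
      intro z hz
      simp only
      rw [hval z hz, if_neg hjk]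
      simp
    constructor
    · rw [integrableOn_congr_fun h0 measurableSet_outerDisc]
      exact integrableOn_zero
    · rw [setIntegral_congr_fun measurableSet_outerDisc h0, if_neg hjk]
      simp
  -- main case j ≤ k
  set C : ℝ := moment ω k s with hC
  set n : ℕ := k - j with hn
  set m : ℤ := 2 * ((j:ℤ) - k - 1) with hm
  have hmn : -m = ((2 * n + 2 : ℕ) : ℤ) := by omega
  -- pointwise form of the integrand on outerDisc
  have heq : Set.EqOn (fun z => ‖solidCauchy ω (eFun j k s) z‖ ^ 2 * B (‖z‖ ^ 2))
      (fun z => (C ^ 2 * (‖z‖) ^ m) * B (‖z‖ ^ 2)) outerDisc := by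
    intro z hz
    simp only
    rw [hval z hz, if_pos hjk]
    rw [norm_mul, Complex.norm_real, Real.norm_eq_abs, norm_zpow]
    rw [mul_pow]
    rw [show (‖z‖ ^ ((j:ℤ) - (k:ℤ) - 1)) ^ 2 = ‖z‖ ^ m by
      rw [hm, mul_comm (2:ℤ), zpow_mul]; norm_cast]
    rw [_root_.sq_abs]
  set fOut : ℂ → ℝ := fun w => (C ^ 2 * (‖w‖) ^ m) * B (‖w‖ ^ 2)
    with hfOut
  set gR : ℝ → ℝ := fun r => (C ^ 2 * r ^ m) * B (r ^ 2) with hgR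
  set hfun : ℝ → ℝ := fun t => C ^ 2 * (t ^ (2 * n) * t⁻¹ * B (1 / t ^ 2)) with hhfun
  -- integrability of hfun on (0,1)
  have h1 : IntegrableOn hfun (Set.Ioo (0:ℝ) 1) := by
    have hWc : IntegrableOn (fun t : ℝ => C ^ 2 * (B (1 / t ^ 2) / (t * (1 - t) ^ 2)))
        (Set.Ioo (0:ℝ) 1) := hW.const_mul _
    apply Integrable.mono hWc
    · apply Measurable.aestronglyMeasurable
      apply measurable_const.mul
      apply Measurable.mul
      · exact (measurable_id.pow_const (2*n)).mul measurable_inv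
      · exact hB_meas.comp (measurable_const.div (measurable_id.pow_const 2))
    · rw [ae_restrict_iff' measurableSet_Ioo]
      apply Filter.Eventually.of_forall
      intro t ht
      obtain ⟨ht0, ht1⟩ := ht
      have hB0 : 0 ≤ B (1 / t ^ 2) := hB_nonneg _ (one_lt_inv_sq ht0 ht1)
      rw [Real.norm_eq_abs, Real.norm_eq_abs, hhfun]
      simp only
      rw [_root_.abs_of_nonneg (by positivity), _root_.abs_of_nonneg (by positivity)]
      have hle1 : t ^ (2 * n) ≤ 1 := pow_le_one₀ (le_of_lt ht0) (le_of_lt ht1)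
      have hinv : t⁻¹ ≤ (t * (1 - t) ^ 2)⁻¹ := by
        apply inv_anti₀ (mul_pos ht0 (pow_pos (by linarith) 2))
        nlinarith [mul_nonneg (mul_nonneg ht0.le ht0.le) (by linarith : (0:ℝ) ≤ 2 - t)]
      calc C ^ 2 * (t ^ (2 * n) * t⁻¹ * B (1 / t ^ 2))
          ≤ C ^ 2 * (1 * (t * (1 - t) ^ 2)⁻¹ * B (1 / t ^ 2)) := by
            apply mul_le_mul_of_nonneg_left _ (sq_nonneg C)
            apply mul_le_mul_of_nonneg_right _ hB0
            apply mul_le_mul hle1 hinv (by positivity) zero_le_one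
        _ = C ^ 2 * (B (1 / t ^ 2) / (t * (1 - t) ^ 2)) := by ring
  -- hfun matches the inv-substituted exterior integrand
  have hmatch : Set.EqOn (fun t : ℝ => (t ^ 2)⁻¹ * (t⁻¹ * gR t⁻¹)) hfun (Set.Ioo (0:ℝ) 1) := by
    intro t ht
    obtain ⟨ht0, ht1⟩ := ht
    have htne : t ≠ 0 := ne_of_gt ht0
    simp only [hgR, hhfun]
    have hz1 : (t⁻¹) ^ m = t ^ (2 * n + 2 : ℕ) := by
      rw [inv_zpow, ← zpow_neg, hmn, zpow_natCast]
    have hz2 : (t⁻¹) ^ 2 = (1 / t ^ 2) := by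
      rw [inv_pow, one_div]
    rw [hz1, hz2]
    field_simp
    ring
  -- integrability of r * gR r on (1, ∞)
  have h2 : IntegrableOn (fun r : ℝ => r * gR r) (Set.Ioi (1:ℝ)) := by
    rw [subst_inv_integrable]
    rw [integrableOn_congr_fun hmatch measurableSet_Ioo]
    exact h1
  -- rectangle integrand
  have hrectEq : Set.EqOn (fun q : ℝ × ℝ => q.1 • fOut (Complex.polarCoord.symm q))
      (fun q : ℝ × ℝ => (q.1 * gR q.1) * 1) (Set.Ioi (1:ℝ) ×ˢ Set.Ioo (-π) π) := by
    rintro ⟨r, θ⟩ ⟨hr, hθ⟩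
    have hr0 : (0:ℝ) < r := lt_trans one_pos hr
    have habs : ‖Complex.polarCoord.symm (r, θ)‖ = r := by
      rw [Complex.norm_polarCoord_symm, _root_.abs_of_pos hr0]
    simp only [hfOut, hgR, smul_eq_mul]
    rw [habs]
    ring
  have h3 : IntegrableOn (fun q : ℝ × ℝ => q.1 • fOut (Complex.polarCoord.symm q))
      (Set.Ioi (1:ℝ) ×ˢ Set.Ioo (-π) π) := by
    rw [integrableOn_congr_fun hrectEq (measurableSet_Ioi.prod measurableSet_Ioo)]
    rw [IntegrableOn, restrict_prod_eq _ _ measurableSet_Ioi measurableSet_Ioo]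
    exact Integrable.mul_prod h2 (integrable_const 1)
  have hIoi_sub : Set.Ioi (1:ℝ) ⊆ Set.Ioi 0 := fun x hx => Set.mem_Ioi.mpr (lt_trans one_pos (Set.mem_Ioi.mp hx))
  constructor
  · rw [integrableOn_congr_fun heq measurableSet_outerDisc]
    exact (setIntegrable_polar outerDisc measurableSet_outerDisc _ measurableSet_Ioi
      hIoi_sub hS_outerDisc fOut).2 h3
  · rw [setIntegral_congr_fun measurableSet_outerDisc heq]
    rw [setIntegral_polar outerDisc measurableSet_outerDisc _ measurableSet_Ioi
      hIoi_sub hS_outerDisc fOut]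
    rw [setIntegral_congr_fun (measurableSet_Ioi.prod measurableSet_Ioo) hrectEq]
    rw [restrict_prod_eq _ _ measurableSet_Ioi measurableSet_Ioo]
    rw [MeasureTheory.integral_prod _ (Integrable.mul_prod h2 (integrable_const 1))]
    have hinner : ∀ r : ℝ, (∫ θ in Set.Ioo (-π) π, (r * gR r) * 1) = (2 * π) * (r * gR r) := by
      intro r
      rw [mul_one, setIntegral_const, Measure.real, Real.volume_Ioo, smul_eq_mul,
        ENNReal.toReal_ofReal (by linarith)]
      ring
    simp_rw [hinner]
    rw [MeasureTheory.integral_const_mul]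
    -- exterior radial integral via substitution
    have hext : (∫ r in Set.Ioi (1:ℝ), r * gR r) = ∫ t in Set.Ioo (0:ℝ) 1, hfun t := by
      rw [subst_inv_integral (fun r => r * gR r)]
      exact setIntegral_congr_fun measurableSet_Ioo hmatch
    rw [hext]
    -- right-hand side integral via the square substitution
    have hrhs : (∫ u in Set.Ioo (0:ℝ) 1, u ^ ((k : ℤ) - (j : ℤ) - 1) * B (1 / u))
        = 2 * ∫ t in Set.Ioo (0:ℝ) 1, t ^ (2 * n) * t⁻¹ * B (1 / t ^ 2) := by
      rw [subst_sq_integral (fun u => u ^ ((k : ℤ) - (j : ℤ) - 1) * B (1 / u))]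
      rw [← MeasureTheory.integral_const_mul]
      apply setIntegral_congr_fun measurableSet_Ioo
      intro t ht
      obtain ⟨ht0, ht1⟩ := ht
      simp only
      have hz3 : (t ^ 2 : ℝ) ^ ((k : ℤ) - (j : ℤ) - 1) = t ^ (2 * n) * (t ^ 2)⁻¹ := by
        have hq : (k : ℤ) - (j : ℤ) - 1 = (n : ℤ) - 1 := by omega
        rw [hq, zpow_sub₀ (by positivity : (t:ℝ)^2 ≠ 0), zpow_natCast, zpow_one, div_eq_mul_inv,
          ← pow_mul]
      rw [hz3]
      have : (1 : ℝ) / t ^ 2 = 1 / t ^ 2 := rfl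
      field_simp
    rw [hrhs, if_pos hjk]
    -- final algebra
    have hfin : (∫ t in Set.Ioo (0:ℝ) 1, hfun t)
        = C ^ 2 * ∫ t in Set.Ioo (0:ℝ) 1, t ^ (2 * n) * t⁻¹ * B (1 / t ^ 2) := by
      rw [hhfun]
      exact MeasureTheory.integral_const_mul _ _
    rw [hfin]
    ring
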